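/- Let ℛ* be a convex set of collections {π_z}_{z∈𝒵} of functions 𝒴² × {0,1}² → [0,1], and let 𝒫* be the family of primitive distributions satisfying IV validity whose collection of marginal pmfs belongs to ℛ*. Then the identified set Θ_I(P; 𝒫*) is a convex subset of ℝ (an interval); its supremum equals the supremum, over collections {π_z}_{z∈𝒵} ∈ ℛ* satisfying (1) data matching: P(Y=y, D=1 | Z=z) = Σ_{y0,d1} π_z(y0, y, 1, d1) and P(Y=y, D=0 | Z=z) = Σ_{y1,d1} π_z(y, y1, 0, d1) for all y, z; (2) common potential-outcome marginal: Σ_{(d0,d1)} π_z(y0,y1,d0,d1) = Σ_{(d0,d1)} π_1(y0,y1,d0,d1) for all y0, y1, z; and (3) each π_z is a pmf; of the objective Σ_{z∈𝒵} P(Z=z) · Σ_{(y0,y1,d0,d1)∈𝒴²×{0,1}²} (d1·y1 + (1−d1)·y0) · π_z(y0, y1, d0, d1); and its infimum equals the analogous infimum of the same objective over the same constraint set. -/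

import Mathlib

open Finset
open scoped Classical

namespace IVPol

/-- Sample space of model primitives `(Y(0), Y(1), D(·,·), Z)`:
a point records the two potential outcomes (elements of the finite outcome set `Y ⊆ ℝ`),
the potential treatments `D(z, a) ∈ {0,1}` for every judge `z` and policy `a`,
and the instrument value `Z`. -/
abbrev Prim (Y : Finset ℝ) (K : ℕ) := Y × Y × (Fin K → Bool → Bool) × Fin K

/-- Sample space of the observed data `(Y, D, Z)`. -/
abbrev Obs (Y : Finset ℝ) (K : ℕ) := Y × Bool × Fin K

/-- A probability distribution on a finite type, given by its pmf. -/
structure Dist (α : Type*) [Fintype α] where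
  p : α → ℝ
  nonneg : ∀ a, 0 ≤ p a
  sum_one : ∑ a, p a = 1

/-- Probability of an event. -/
noncomputable def Dist.pr {α : Type*} [Fintype α] (P : Dist α) (A : Set α) : ℝ :=
  ∑ a, if a ∈ A then P.p a else 0

/-- Expectation of a real-valued random variable. -/
noncomputable def Dist.exp {α : Type*} [Fintype α] (P : Dist α) (f : α → ℝ) : ℝ :=
  ∑ a, P.p a * f a

variable {Y : Finset ℝ} {K : ℕ}

/-- Potential treatment `D(z, a)`. -/
def pd (ω : Prim Y K) (z : Fin K) (a : Bool) : Bool := ω.2.2.1 z a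

/-- The instrument `Z`. -/
def pz (ω : Prim Y K) : Fin K := ω.2.2.2

/-- Observed treatment `D = D(Z, 0)`. -/
def obsD (ω : Prim Y K) : Bool := pd ω (pz ω) false

/-- Observed outcome `Y = Y(D(Z, 0))`. -/
def obsY (ω : Prim Y K) : Y := if obsD ω then ω.2.1 else ω.1

/-- Counterfactual outcome `Y(D(Z, 1))`. -/
noncomputable def cfY (ω : Prim Y K) : ℝ :=
  if pd ω (pz ω) true then (ω.2.1 : ℝ) else (ω.1 : ℝ)

/-- IV validity: `(Y(0), Y(1), D(·,·))` is independent of `Z`. -/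
def IVvalid (Ps : Dist (Prim Y K)) : Prop :=
  ∀ (a b : Y) (g : Fin K → Bool → Bool) (z : Fin K),
    Ps.pr {ω | ω.1 = a ∧ ω.2.1 = b ∧ ω.2.2.1 = g ∧ ω.2.2.2 = z}
      = Ps.pr {ω | ω.1 = a ∧ ω.2.1 = b ∧ ω.2.2.1 = g} * Ps.pr {ω | ω.2.2.2 = z}

/-- `Ps` generates the observed data distribution `P`:
the law of `(Y(D(Z,0)), D(Z,0), Z)` under `Ps` is `P`. -/
def generates (Ps : Dist (Prim Y K)) (P : Dist (Obs Y K)) : Prop :=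
  ∀ (y : Y) (d : Bool) (z : Fin K),
    P.p (y, d, z) = Ps.pr {ω | obsY ω = y ∧ obsD ω = d ∧ pz ω = z}

/-- Marginal pmf of judge `z`:
`π_z(y0, y1, d0, d1) = P*(Y(0)=y0, Y(1)=y1, D(z,0)=d0, D(z,1)=d1)`. -/
noncomputable def marginal (Ps : Dist (Prim Y K)) (z : Fin K) (y0 y1 : Y) (d0 d1 : Bool) : ℝ :=
  Ps.pr {ω | ω.1 = y0 ∧ ω.2.1 = y1 ∧ pd ω z false = d0 ∧ pd ω z true = d1}

/-- Probability of `Z = z` under the observed distribution. -/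
noncomputable def prZ (P : Dist (Obs Y K)) (z : Fin K) : ℝ := P.pr {o | o.2.2 = z}

/-- Conditional probability `P(Y = y, D = d | Z = z)` of the observed data. -/
noncomputable def obsCond (P : Dist (Obs Y K)) (y : Y) (d : Bool) (z : Fin K) : ℝ :=
  P.p (y, d, z) / prZ P z

/-- A collection of candidate marginal pmfs, one for each judge. -/
abbrev Coll (Y : Finset ℝ) (K : ℕ) := Fin K → Y → Y → Bool → Bool → ℝ

/-- The collection of marginal pmfs of a primitive distribution. -/
noncomputable def marginalColl (Ps : Dist (Prim Y K)) : Coll Y K :=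
  fun z y0 y1 d0 d1 => marginal Ps z y0 y1 d0 d1

/-- Conditions (1)–(3) of Proposition 1: data matching, common potential-outcome
marginal, and validity of the pmfs. -/
def baseConstraints [NeZero K] (P : Dist (Obs Y K)) (π : Coll Y K) : Prop :=
  (∀ (y : Y) (z : Fin K),
      obsCond P y true z = ∑ y0 : Y, ∑ d1 : Bool, π z y0 y true d1) ∧
  (∀ (y : Y) (z : Fin K),
      obsCond P y false z = ∑ y1 : Y, ∑ d1 : Bool, π z y y1 false d1) ∧
  (∀ (y0 y1 : Y) (z : Fin K),
      ∑ d0 : Bool, ∑ d1 : Bool, π z y0 y1 d0 d1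
        = ∑ d0 : Bool, ∑ d1 : Bool, π 0 y0 y1 d0 d1) ∧
  (∀ (z : Fin K) (y0 y1 : Y) (d0 d1 : Bool), 0 ≤ π z y0 y1 d0 d1) ∧
  (∀ z : Fin K, ∑ y0 : Y, ∑ y1 : Y, ∑ d0 : Bool, ∑ d1 : Bool, π z y0 y1 d0 d1 = 1)

/-- The linear-programming objective
`∑_z P(Z=z) ∑_{y0,y1,d0,d1} (d1·y1 + (1−d1)·y0) · π_z(y0,y1,d0,d1)`. -/
noncomputable def objective (P : Dist (Obs Y K)) (π : Coll Y K) : ℝ :=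
  ∑ z : Fin K, prZ P z *
    ∑ y0 : Y, ∑ y1 : Y, ∑ d0 : Bool, ∑ d1 : Bool,
      (if d1 then (y1 : ℝ) else (y0 : ℝ)) * π z y0 y1 d0 d1

/-- Average counterfactual outcome `θ = E[Y(D(Z,1))]`. -/
noncomputable def theta (Ps : Dist (Prim Y K)) : ℝ := Ps.exp cfY

/-- The identified set for the average counterfactual outcome. -/
def ThetaI (P : Dist (Obs Y K)) (fam : Set (Dist (Prim Y K))) : Set ℝ :=
  {t | ∃ Ps ∈ fam, generates Ps P ∧ theta Ps = t}

/-! ### Helper lemmas -/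

section Helpers

lemma pr_nonneg {α : Type*} [Fintype α] (P : Dist α) (A : Set α) : 0 ≤ P.pr A :=
  Finset.sum_nonneg fun a _ => by by_cases h : a ∈ A <;> simp [Dist.pr, h, P.nonneg a]

/-- Equivalence between `Bool → Bool` and `Bool × Bool`. -/
def bbEquiv : (Bool → Bool) ≃ Bool × Bool where
  toFun h := (h false, h true)
  invFun p := fun b => bif b then p.2 else p.1
  left_inv h := by funext b; cases b <;> simp
  right_inv p := by simp

lemma sumBB (G : Bool → Bool → ℝ) :
    ∑ h : Bool → Bool, G (h false) (h true) = ∑ d0 : Bool, ∑ d1 : Bool, G d0 d1 := by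
  rw [show (∑ d0 : Bool, ∑ d1 : Bool, G d0 d1) = ∑ p : Bool × Bool, G p.1 p.2 by
    rw [Fintype.sum_prod_type]]
  exact Fintype.sum_equiv bbEquiv _ _ fun _ => rfl

lemma sum_g_prod {K : ℕ} (F : Fin K → (Bool → Bool) → ℝ) :
    ∑ g : Fin K → Bool → Bool, ∏ z, F z (g z) = ∏ z, ∑ h : Bool → Bool, F z h := by
  rw [Finset.prod_univ_sum, ← Fintype.piFinset_univ]

variable {Y : Finset ℝ} {K : ℕ}

lemma pr_eq_sum4 (Ps : Dist (Prim Y K))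
    (C : Y → Y → (Fin K → Bool → Bool) → Fin K → Prop) [∀ a b g z, Decidable (C a b g z)] :
    Ps.pr {ω | C ω.1 ω.2.1 ω.2.2.1 ω.2.2.2}
      = ∑ a : Y, ∑ b : Y, ∑ g : Fin K → Bool → Bool, ∑ z : Fin K,
          if C a b g z then Ps.p (a, b, g, z) else 0 := by
  unfold Dist.pr
  simp only [Fintype.sum_prod_type, Set.mem_setOf_eq]

lemma pr_eq_sum3 (P : Dist (Obs Y K))
    (C : Y → Bool → Fin K → Prop) [∀ y d z, Decidable (C y d z)] :
    P.pr {o | C o.1 o.2.1 o.2.2}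
      = ∑ y : Y, ∑ d : Bool, ∑ z : Fin K, if C y d z then P.p (y, d, z) else 0 := by
  unfold Dist.pr
  simp only [Fintype.sum_prod_type, Set.mem_setOf_eq]

lemma pr_point (Ps : Dist (Prim Y K)) (a b : Y) (g : Fin K → Bool → Bool) (z : Fin K) :
    Ps.pr {ω | ω.1 = a ∧ ω.2.1 = b ∧ ω.2.2.1 = g ∧ ω.2.2.2 = z} = Ps.p (a, b, g, z) := by
  unfold Dist.pr
  rw [Finset.sum_eq_single (a, b, g, z)]
  · simp
  · intro ω _ hne
    rw [if_neg]
    rintro ⟨h1, h2, h3, h4⟩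
    exact hne (by rw [Prod.ext_iff, Prod.ext_iff, Prod.ext_iff]; exact ⟨h1, h2, h3, h4⟩)
  · intro h; exact absurd (Finset.mem_univ _) h

lemma pr3 (Ps : Dist (Prim Y K)) (a b : Y) (g : Fin K → Bool → Bool) :
    Ps.pr {ω | ω.1 = a ∧ ω.2.1 = b ∧ ω.2.2.1 = g} = ∑ z, Ps.p (a, b, g, z) := by
  rw [pr_eq_sum4 Ps (fun a' b' g' _ => a' = a ∧ b' = b ∧ g' = g)]
  simp [ite_and, Finset.sum_ite_eq']

lemma prZ4 (Ps : Dist (Prim Y K)) (z : Fin K) :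
    Ps.pr {ω | ω.2.2.2 = z}
      = ∑ a : Y, ∑ b : Y, ∑ g : Fin K → Bool → Bool, Ps.p (a, b, g, z) := by
  rw [pr_eq_sum4 Ps (fun _ _ _ z' => z' = z)]
  simp [Finset.sum_ite_eq']

lemma prZ_eq (P : Dist (Obs Y K)) (z : Fin K) :
    prZ P z = ∑ y : Y, ∑ d : Bool, P.p (y, d, z) := by
  unfold prZ
  rw [pr_eq_sum3 P (fun _ _ z' => z' = z)]
  simp [Finset.sum_ite_eq']

lemma prZ_sum (P : Dist (Obs Y K)) : ∑ z, prZ P z = 1 := by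
  have h := P.sum_one
  simp only [Fintype.sum_prod_type] at h
  simp only [prZ_eq]
  rw [← h, Finset.sum_comm]
  refine Finset.sum_congr rfl fun y _ => ?_
  rw [Finset.sum_comm]

lemma marginal_eq_sum (Ps : Dist (Prim Y K)) (z : Fin K) (y0 y1 : Y) (d0 d1 : Bool) :
    marginal Ps z y0 y1 d0 d1
      = ∑ g : Fin K → Bool → Bool, if g z false = d0 ∧ g z true = d1
          then ∑ z' : Fin K, Ps.p (y0, y1, g, z') else 0 := by
  unfold marginal pd
  rw [pr_eq_sum4 Ps (fun a b g _ => a = y0 ∧ b = y1 ∧ g z false = d0 ∧ g z true = d1)]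
  rw [Finset.sum_eq_single y0]; rotate_left
  · intro a _ hne
    refine Finset.sum_eq_zero fun b _ => Finset.sum_eq_zero fun g _ =>
      Finset.sum_eq_zero fun z' _ => ?_
    exact if_neg (by rintro ⟨h, -⟩; exact hne h)
  · intro h; exact absurd (Finset.mem_univ _) h
  rw [Finset.sum_eq_single y1]; rotate_left
  · intro b _ hne
    refine Finset.sum_eq_zero fun g _ => Finset.sum_eq_zero fun z' _ => ?_
    exact if_neg (by rintro ⟨-, h, -⟩; exact hne h)
  · intro h; exact absurd (Finset.mem_univ _) h
  refine Finset.sum_congr rfl fun g _ => ?_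
  by_cases hc : g z false = d0 ∧ g z true = d1
  · rw [if_pos hc]
    exact Finset.sum_congr rfl fun z' _ => if_pos ⟨rfl, rfl, hc.1, hc.2⟩
  · rw [if_neg hc]
    exact Finset.sum_eq_zero fun z' _ => if_neg (by rintro ⟨-, -, h1, h2⟩; exact hc ⟨h1, h2⟩)

lemma gen_event_eq (Ps : Dist (Prim Y K)) (y : Y) (d : Bool) (z : Fin K) :
    Ps.pr {ω | obsY ω = y ∧ obsD ω = d ∧ pz ω = z}
      = ∑ a : Y, ∑ b : Y, ∑ g : Fin K → Bool → Bool,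
          if (if g z false then b else a) = y ∧ g z false = d
            then Ps.p (a, b, g, z) else 0 := by
  have hset : {ω : Prim Y K | obsY ω = y ∧ obsD ω = d ∧ pz ω = z}
      = {ω : Prim Y K | (fun (a b : Y) (g : Fin K → Bool → Bool) (z' : Fin K) =>
          z' = z ∧ (if g z' false then b else a) = y ∧ g z' false = d)
            ω.1 ω.2.1 ω.2.2.1 ω.2.2.2} := by
    ext ω
    simp only [Set.mem_setOf_eq, obsY, obsD, pd, pz]
    constructor
    · rintro ⟨h1, h2, h3⟩; exact ⟨h3, h1, h2⟩
    · rintro ⟨h3, h1, h2⟩; exact ⟨h1, h2, h3⟩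
  rw [hset, pr_eq_sum4 Ps (fun (a b : Y) (g : Fin K → Bool → Bool) (z' : Fin K) =>
    z' = z ∧ (if g z' false then b else a) = y ∧ g z' false = d)]
  refine Finset.sum_congr rfl fun a _ => Finset.sum_congr rfl fun b _ =>
    Finset.sum_congr rfl fun g _ => ?_
  rw [Finset.sum_eq_single z]; rotate_left
  · intro z' _ hne; exact if_neg (by rintro ⟨h, -⟩; exact hne h)
  · intro h; exact absurd (Finset.mem_univ _) h
  by_cases hc : ((if g z false then b else a) = y ∧ g z false = d)
  · rw [if_pos ⟨rfl, hc.1, hc.2⟩, if_pos hc]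
  · rw [if_neg (by rintro ⟨-, h1, h2⟩; exact hc ⟨h1, h2⟩), if_neg hc]

lemma theta_eq (Ps : Dist (Prim Y K)) :
    theta Ps = ∑ a : Y, ∑ b : Y, ∑ g : Fin K → Bool → Bool, ∑ z : Fin K,
      Ps.p (a, b, g, z) * (if g z true then (b : ℝ) else (a : ℝ)) := by
  unfold theta Dist.exp cfY pd pz
  rw [Fintype.sum_prod_type]
  refine Finset.sum_congr rfl fun a _ => ?_
  rw [Fintype.sum_prod_type]
  refine Finset.sum_congr rfl fun b _ => ?_
  rw [Fintype.sum_prod_type]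

end Helpers


/-! ### The constructed primitive distribution -/

section Construction

variable {Y : Finset ℝ} {K : ℕ}

/-- Common potential-outcome marginal determined by a collection. -/
noncomputable def mupi [NeZero K] (π : Coll Y K) (y0 y1 : Y) : ℝ :=
  ∑ d0 : Bool, ∑ d1 : Bool, π 0 y0 y1 d0 d1

/-- Conditionally-independent coupling of the marginals. -/
noncomputable def qfun [NeZero K] (π : Coll Y K) (y0 y1 : Y)
    (g : Fin K → Bool → Bool) : ℝ :=
  if mupi π y0 y1 = 0 then 0
  else (∏ z : Fin K, π z y0 y1 (g z false) (g z true)) / (mupi π y0 y1) ^ (K - 1)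

variable [NeZero K] {π : Coll Y K}

lemma mupi_nonneg (hnn : ∀ (z : Fin K) (y0 y1 : Y) (d0 d1 : Bool), 0 ≤ π z y0 y1 d0 d1)
    (y0 y1 : Y) : 0 ≤ mupi π y0 y1 :=
  Finset.sum_nonneg fun d0 _ => Finset.sum_nonneg fun d1 _ => hnn 0 y0 y1 d0 d1

lemma qfun_nonneg (hnn : ∀ (z : Fin K) (y0 y1 : Y) (d0 d1 : Bool), 0 ≤ π z y0 y1 d0 d1)
    (y0 y1 : Y) (g : Fin K → Bool → Bool) : 0 ≤ qfun π y0 y1 g := by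
  unfold qfun
  by_cases h : mupi π y0 y1 = 0
  · simp [h]
  · rw [if_neg h]
    have hpos : 0 < mupi π y0 y1 := lt_of_le_of_ne (mupi_nonneg hnn y0 y1) (Ne.symm h)
    exact div_nonneg (Finset.prod_nonneg fun z _ => hnn z y0 y1 _ _) (le_of_lt (pow_pos hpos _))

/-- Master computation: sums of `φ (g z false) (g z true)` against the coupling `qfun`
reduce to sums against the marginal `π z`. -/
lemma master (hnn : ∀ (z : Fin K) (y0 y1 : Y) (d0 d1 : Bool), 0 ≤ π z y0 y1 d0 d1)
    (hcm : ∀ (z : Fin K) (y0 y1 : Y),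
      (∑ d0 : Bool, ∑ d1 : Bool, π z y0 y1 d0 d1) = mupi π y0 y1)
    (y0 y1 : Y) (z : Fin K) (φ : Bool → Bool → ℝ) :
    ∑ g : Fin K → Bool → Bool, φ (g z false) (g z true) * qfun π y0 y1 g
      = ∑ d0 : Bool, ∑ d1 : Bool, φ d0 d1 * π z y0 y1 d0 d1 := by
  by_cases hμ : mupi π y0 y1 = 0
  · have hz : ∀ (d0 d1 : Bool), π z y0 y1 d0 d1 = 0 := by
      intro d0 d1
      have h0 : (∑ d0 : Bool, ∑ d1 : Bool, π z y0 y1 d0 d1) = 0 := (hcm z y0 y1).trans hμ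
      have h1 := (Finset.sum_eq_zero_iff_of_nonneg
        (fun d0 _ => Finset.sum_nonneg fun d1 _ => hnn z y0 y1 d0 d1)).1 h0 d0 (Finset.mem_univ _)
      exact (Finset.sum_eq_zero_iff_of_nonneg (fun d1 _ => hnn z y0 y1 d0 d1)).1 h1 d1
        (Finset.mem_univ _)
    simp [qfun, hμ, hz]
  · have hpos : 0 < mupi π y0 y1 := lt_of_le_of_ne (mupi_nonneg hnn y0 y1) (Ne.symm hμ)
    have hpow : (mupi π y0 y1) ^ (K - 1) ≠ 0 := pow_ne_zero _ (ne_of_gt hpos)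
    -- rewrite qfun in the non-degenerate branch
    have hq : ∀ g : Fin K → Bool → Bool, qfun π y0 y1 g
        = (∏ z' : Fin K, π z' y0 y1 (g z' false) (g z' true)) / (mupi π y0 y1) ^ (K - 1) :=
      fun g => if_neg hμ
    simp only [hq]
    -- numerator computation
    have key : ∑ g : Fin K → Bool → Bool,
        φ (g z false) (g z true) * ∏ z' : Fin K, π z' y0 y1 (g z' false) (g z' true)
        = (∑ d0 : Bool, ∑ d1 : Bool, φ d0 d1 * π z y0 y1 d0 d1) * (mupi π y0 y1) ^ (K - 1) := by
      have step1 : ∀ g : Fin K → Bool → Bool,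
          φ (g z false) (g z true) * ∏ z' : Fin K, π z' y0 y1 (g z' false) (g z' true)
          = ∏ z' : Fin K, ((if z' = z then φ (g z' false) (g z' true) else 1)
              * π z' y0 y1 (g z' false) (g z' true)) := by
        intro g
        rw [Finset.prod_mul_distrib, Finset.prod_ite_eq' Finset.univ z
          (fun z' => φ (g z' false) (g z' true))]
        simp
      simp only [step1]
      rw [sum_g_prod (fun z' h => (if z' = z then φ (h false) (h true) else 1)
        * π z' y0 y1 (h false) (h true))]
      have step2 : ∀ z' : Fin K,
          (∑ h : Bool → Bool, (if z' = z then φ (h false) (h true) else 1)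
            * π z' y0 y1 (h false) (h true))
          = if z' = z then (∑ d0 : Bool, ∑ d1 : Bool, φ d0 d1 * π z y0 y1 d0 d1)
            else mupi π y0 y1 := by
        intro z'
        by_cases h : z' = z
        · subst h
          simp only [eq_self_iff_true, ite_true, if_true]
          rw [sumBB (fun d0 d1 => φ d0 d1 * π z' y0 y1 d0 d1)]
        · simp only [if_neg h]
          rw [show (∑ h : Bool → Bool, 1 * π z' y0 y1 (h false) (h true))
            = ∑ h : Bool → Bool, π z' y0 y1 (h false) (h true) by simp]
          rw [sumBB (fun d0 d1 => π z' y0 y1 d0 d1)]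
          exact hcm z' y0 y1
      simp only [step2]
      rw [← Finset.mul_prod_erase Finset.univ _ (Finset.mem_univ z)]
      rw [if_pos rfl]
      congr 1
      rw [Finset.prod_congr rfl (fun z' hz' =>
        if_neg (Finset.ne_of_mem_erase hz') ), Finset.prod_const]
      rw [Finset.card_erase_of_mem (Finset.mem_univ z), Finset.card_univ, Fintype.card_fin]
    calc ∑ g : Fin K → Bool → Bool, φ (g z false) (g z true)
          * ((∏ z' : Fin K, π z' y0 y1 (g z' false) (g z' true)) / (mupi π y0 y1) ^ (K - 1))
        = (∑ g : Fin K → Bool → Bool, φ (g z false) (g z true)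
            * ∏ z' : Fin K, π z' y0 y1 (g z' false) (g z' true)) / (mupi π y0 y1) ^ (K - 1) := by
          rw [Finset.sum_div]
          exact Finset.sum_congr rfl fun g _ => (mul_div_assoc _ _ _).symm
      _ = ∑ d0 : Bool, ∑ d1 : Bool, φ d0 d1 * π z y0 y1 d0 d1 := by
          rw [key, mul_div_cancel_right₀ _ hpow]

end Construction

section Swaps

lemma swap3 {α β γ : Type*} [Fintype α] [Fintype β] [Fintype γ] (f : α → β → γ → ℝ) :
    ∑ a, ∑ b, ∑ c, f a b c = ∑ c, ∑ a, ∑ b, f a b c :=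
  (Finset.sum_congr rfl fun _ _ => Finset.sum_comm).trans Finset.sum_comm

lemma swap4 {α β γ δ : Type*} [Fintype α] [Fintype β] [Fintype γ] [Fintype δ]
    (f : α → β → γ → δ → ℝ) :
    ∑ a, ∑ b, ∑ c, ∑ d, f a b c d = ∑ d, ∑ a, ∑ b, ∑ c, f a b c d := by
  refine (Finset.sum_congr rfl fun a _ => swap3 _).trans Finset.sum_comm

lemma swap5 {α β γ δ ε : Type*} [Fintype α] [Fintype β] [Fintype γ] [Fintype δ] [Fintype ε]
    (f : α → β → γ → δ → ε → ℝ) :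
    ∑ a, ∑ b, ∑ c, ∑ d, ∑ e, f a b c d e = ∑ e, ∑ a, ∑ b, ∑ c, ∑ d, f a b c d e := by
  refine (Finset.sum_congr rfl fun a _ => swap4 _).trans Finset.sum_comm

end Swaps

section Backward

variable {Y : Finset ℝ} {K : ℕ} [NeZero K] {π : Coll Y K}

omit [NeZero K] in
lemma sum_prim (f : Prim Y K → ℝ) :
    ∑ ω : Prim Y K, f ω
      = ∑ a : Y, ∑ b : Y, ∑ g : Fin K → Bool → Bool, ∑ z : Fin K, f (a, b, g, z) := by
  rw [Fintype.sum_prod_type]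
  refine Finset.sum_congr rfl fun a _ => ?_
  rw [Fintype.sum_prod_type]
  refine Finset.sum_congr rfl fun b _ => ?_
  rw [Fintype.sum_prod_type]

lemma qfun_sum (hnn : ∀ (z : Fin K) (y0 y1 : Y) (d0 d1 : Bool), 0 ≤ π z y0 y1 d0 d1)
    (hcm : ∀ (z : Fin K) (y0 y1 : Y),
      (∑ d0 : Bool, ∑ d1 : Bool, π z y0 y1 d0 d1) = mupi π y0 y1)
    (y0 y1 : Y) : ∑ g : Fin K → Bool → Bool, qfun π y0 y1 g = mupi π y0 y1 := by
  have h := master hnn hcm y0 y1 0 (fun _ _ => 1)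
  simpa [mupi] using h

/-- The primitive distribution constructed from a collection of marginals
satisfying the base constraints. -/
noncomputable def PsC (P : Dist (Obs Y K)) (π : Coll Y K) [NeZero K]
    (hnn : ∀ (z : Fin K) (y0 y1 : Y) (d0 d1 : Bool), 0 ≤ π z y0 y1 d0 d1)
    (hcm : ∀ (z : Fin K) (y0 y1 : Y),
      (∑ d0 : Bool, ∑ d1 : Bool, π z y0 y1 d0 d1) = mupi π y0 y1)
    (hs1 : ∑ y0 : Y, ∑ y1 : Y, mupi π y0 y1 = 1) : Dist (Prim Y K) where
  p ω := prZ P ω.2.2.2 * qfun π ω.1 ω.2.1 ω.2.2.1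
  nonneg ω := mul_nonneg (pr_nonneg P _) (qfun_nonneg hnn _ _ _)
  sum_one := by
    rw [sum_prim (fun ω => prZ P ω.2.2.2 * qfun π ω.1 ω.2.1 ω.2.2.1)]
    have h1 : ∀ (a b : Y) (g : Fin K → Bool → Bool),
        ∑ z : Fin K, prZ P z * qfun π a b g = qfun π a b g := by
      intro a b g
      rw [← Finset.sum_mul, prZ_sum, one_mul]
    simp only [h1]
    rw [← hs1]
    refine Finset.sum_congr rfl fun a _ => Finset.sum_congr rfl fun b _ => ?_
    exact qfun_sum hnn hcm a b

variable {P : Dist (Obs Y K)}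
variable (hnn : ∀ (z : Fin K) (y0 y1 : Y) (d0 d1 : Bool), 0 ≤ π z y0 y1 d0 d1)
variable (hcm : ∀ (z : Fin K) (y0 y1 : Y),
      (∑ d0 : Bool, ∑ d1 : Bool, π z y0 y1 d0 d1) = mupi π y0 y1)
variable (hs1 : ∑ y0 : Y, ∑ y1 : Y, mupi π y0 y1 = 1)

lemma qfun_total : (∀ (z : Fin K) (y0 y1 : Y) (d0 d1 : Bool), 0 ≤ π z y0 y1 d0 d1) →
    (∀ (z : Fin K) (y0 y1 : Y),
      (∑ d0 : Bool, ∑ d1 : Bool, π z y0 y1 d0 d1) = mupi π y0 y1) →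
    (∑ y0 : Y, ∑ y1 : Y, mupi π y0 y1 = 1) →
    ∑ a : Y, ∑ b : Y, ∑ g : Fin K → Bool → Bool, qfun π a b g = 1 := by
  intro hnn hcm hs1
  rw [← hs1]
  exact Finset.sum_congr rfl fun a _ => Finset.sum_congr rfl fun b _ => qfun_sum hnn hcm a b

lemma PsC_marginal :
    marginalColl (PsC P π hnn hcm hs1) = π := by
  funext z y0 y1 d0 d1
  show marginal (PsC P π hnn hcm hs1) z y0 y1 d0 d1 = π z y0 y1 d0 d1
  rw [marginal_eq_sum]
  have h1 : ∀ g : Fin K → Bool → Bool,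
      (∑ z' : Fin K, (PsC P π hnn hcm hs1).p (y0, y1, g, z')) = qfun π y0 y1 g := by
    intro g
    show (∑ z' : Fin K, prZ P z' * qfun π y0 y1 g) = qfun π y0 y1 g
    rw [← Finset.sum_mul, prZ_sum, one_mul]
  simp only [h1]
  have h2 : ∀ g : Fin K → Bool → Bool,
      (if g z false = d0 ∧ g z true = d1 then qfun π y0 y1 g else 0)
        = (if g z false = d0 ∧ g z true = d1 then (1:ℝ) else 0) * qfun π y0 y1 g := by
    intro g; rw [boole_mul]
  simp only [h2]
  rw [master hnn hcm y0 y1 z (fun e0 e1 => if e0 = d0 ∧ e1 = d1 then (1:ℝ) else 0)]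
  simp only [boole_mul]
  simp [ite_and, Finset.sum_ite_eq']

lemma PsC_IVvalid : IVvalid (PsC P π hnn hcm hs1) := by
  intro a b g z
  rw [pr_point, pr3, prZ4]
  show prZ P z * qfun π a b g
      = (∑ z' : Fin K, prZ P z' * qfun π a b g)
        * ∑ a' : Y, ∑ b' : Y, ∑ g' : Fin K → Bool → Bool, prZ P z * qfun π a' b' g'
  have h1 : (∑ z' : Fin K, prZ P z' * qfun π a b g) = qfun π a b g := by
    rw [← Finset.sum_mul, prZ_sum, one_mul]
  have h2 : (∑ a' : Y, ∑ b' : Y, ∑ g' : Fin K → Bool → Bool, prZ P z * qfun π a' b' g')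
      = prZ P z := by
    have : ∀ a' : Y, ∀ b' : Y, (∑ g' : Fin K → Bool → Bool, prZ P z * qfun π a' b' g')
        = prZ P z * ∑ g' : Fin K → Bool → Bool, qfun π a' b' g' := fun a' b' =>
      (Finset.mul_sum _ _ _).symm
    simp only [this]
    rw [show (∑ a' : Y, ∑ b' : Y, prZ P z * ∑ g' : Fin K → Bool → Bool, qfun π a' b' g')
        = prZ P z * ∑ a' : Y, ∑ b' : Y, ∑ g' : Fin K → Bool → Bool, qfun π a' b' g' by
      rw [Finset.mul_sum]
      exact Finset.sum_congr rfl fun a' _ => (Finset.mul_sum _ _ _).symm]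
    rw [qfun_total hnn hcm hs1, mul_one]
  rw [h1, h2, mul_comm]

end Backward

section Backward2

variable {Y : Finset ℝ} {K : ℕ} [NeZero K] {π : Coll Y K} {P : Dist (Obs Y K)}
variable (hnn : ∀ (z : Fin K) (y0 y1 : Y) (d0 d1 : Bool), 0 ≤ π z y0 y1 d0 d1)
variable (hcm : ∀ (z : Fin K) (y0 y1 : Y),
      (∑ d0 : Bool, ∑ d1 : Bool, π z y0 y1 d0 d1) = mupi π y0 y1)
variable (hs1 : ∑ y0 : Y, ∑ y1 : Y, mupi π y0 y1 = 1)

lemma PsC_generates (hPz : ∀ z : Fin K, 0 < prZ P z)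
    (hd1 : ∀ (y : Y) (z : Fin K),
      obsCond P y true z = ∑ y0 : Y, ∑ d1 : Bool, π z y0 y true d1)
    (hd0 : ∀ (y : Y) (z : Fin K),
      obsCond P y false z = ∑ y1 : Y, ∑ d1 : Bool, π z y y1 false d1) :
    generates (PsC P π hnn hcm hs1) P := by
  intro y d z
  rw [gen_event_eq]
  show P.p (y, d, z) = ∑ a : Y, ∑ b : Y, ∑ g : Fin K → Bool → Bool,
    if (if g z false then b else a) = y ∧ g z false = d
      then prZ P z * qfun π a b g else 0
  cases d
  · -- d = false
    have hiff : ∀ (a b : Y) (g : Fin K → Bool → Bool),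
        (((if g z false then b else a) = y ∧ g z false = false))
          ↔ (g z false = false ∧ a = y) := by
      intro a b g; cases hgz : g z false <;> simp [hgz]
    have hre : ∀ (a b : Y) (g : Fin K → Bool → Bool),
        (if (if g z false then b else a) = y ∧ g z false = false
          then prZ P z * qfun π a b g else 0)
        = (if g z false = false ∧ a = y then prZ P z * qfun π a b g else 0) :=
      fun a b g => if_congr (hiff a b g) rfl rfl
    simp only [hre]
    rw [Finset.sum_eq_single y]; rotate_left
    · intro a _ hne
      exact Finset.sum_eq_zero fun b _ => Finset.sum_eq_zero fun g _ =>
        if_neg (by rintro ⟨-, h⟩; exact hne h)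
    · intro h; exact absurd (Finset.mem_univ _) h
    simp only [eq_self_iff_true, and_true]
    have hb : ∀ (b : Y) (g : Fin K → Bool → Bool),
        (if g z false = false then prZ P z * qfun π y b g else 0)
        = prZ P z * ((if g z false = false then (1:ℝ) else 0) * qfun π y b g) := by
      intro b g; by_cases h : g z false = false <;> simp [h]
    simp only [hb]
    rw [show (∑ b : Y, ∑ g : Fin K → Bool → Bool,
        prZ P z * ((if g z false = false then (1:ℝ) else 0) * qfun π y b g))
        = prZ P z * ∑ b : Y, ∑ g : Fin K → Bool → Bool,
            (if g z false = false then (1:ℝ) else 0) * qfun π y b g by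
      rw [Finset.mul_sum]
      exact Finset.sum_congr rfl fun b _ => (Finset.mul_sum _ _ _).symm]
    have hmas : ∀ b : Y, (∑ g : Fin K → Bool → Bool,
        (if g z false = false then (1:ℝ) else 0) * qfun π y b g)
        = ∑ d1 : Bool, π z y b false d1 := by
      intro b
      rw [master hnn hcm y b z (fun e0 _ => if e0 = false then (1:ℝ) else 0)]
      simp only [boole_mul]
      rw [Finset.sum_comm]
      rw [show (∑ d1 : Bool, ∑ d0 : Bool, if d0 = false then π z y b d0 d1 else 0)
          = ∑ d1 : Bool, π z y b false d1 from
        Finset.sum_congr rfl fun d1 _ => by simp [Finset.sum_ite_eq']]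
    simp only [hmas]
    rw [← hd0 y z]
    unfold obsCond
    rw [mul_comm, div_mul_cancel₀ _ (ne_of_gt (hPz z))]
  · -- d = true
    have hre : ∀ (a b : Y) (g : Fin K → Bool → Bool),
        (if (if g z false then b else a) = y ∧ g z false = true
          then prZ P z * qfun π a b g else 0)
        = (if g z false = true ∧ b = y then prZ P z * qfun π a b g else 0) :=
      fun a b g => if_congr (by cases hgz : g z false <;> simp [hgz]) rfl rfl
    simp only [hre]
    rw [show (∑ a : Y, ∑ b : Y, ∑ g : Fin K → Bool → Bool,
        if g z false = true ∧ b = y then prZ P z * qfun π a b g else 0)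
        = ∑ a : Y, ∑ g : Fin K → Bool → Bool,
            if g z false = true then prZ P z * qfun π a y g else 0 from
      Finset.sum_congr rfl fun a _ => by
        rw [Finset.sum_eq_single y]; rotate_left
        · intro b _ hne
          exact Finset.sum_eq_zero fun g _ => if_neg (by rintro ⟨-, h⟩; exact hne h)
        · intro h; exact absurd (Finset.mem_univ _) h
        simp only [eq_self_iff_true, and_true]]
    have hb : ∀ (a : Y) (g : Fin K → Bool → Bool),
        (if g z false = true then prZ P z * qfun π a y g else 0)
        = prZ P z * ((if g z false = true then (1:ℝ) else 0) * qfun π a y g) := by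
      intro a g; by_cases h : g z false = true <;> simp [h]
    simp only [hb]
    rw [show (∑ a : Y, ∑ g : Fin K → Bool → Bool,
        prZ P z * ((if g z false = true then (1:ℝ) else 0) * qfun π a y g))
        = prZ P z * ∑ a : Y, ∑ g : Fin K → Bool → Bool,
            (if g z false = true then (1:ℝ) else 0) * qfun π a y g by
      rw [Finset.mul_sum]
      exact Finset.sum_congr rfl fun a _ => (Finset.mul_sum _ _ _).symm]
    have hmas : ∀ a : Y, (∑ g : Fin K → Bool → Bool,
        (if g z false = true then (1:ℝ) else 0) * qfun π a y g)
        = ∑ d1 : Bool, π z a y true d1 := by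
      intro a
      rw [master hnn hcm a y z (fun e0 _ => if e0 = true then (1:ℝ) else 0)]
      simp only [boole_mul]
      rw [Finset.sum_comm]
      exact Finset.sum_congr rfl fun d1 _ => by simp [Finset.sum_ite_eq']
    simp only [hmas]
    rw [← hd1 y z]
    unfold obsCond
    rw [mul_comm, div_mul_cancel₀ _ (ne_of_gt (hPz z))]

lemma PsC_theta : theta (PsC P π hnn hcm hs1) = objective P π := by
  rw [theta_eq]
  show (∑ a : Y, ∑ b : Y, ∑ g : Fin K → Bool → Bool, ∑ z : Fin K,
      (prZ P z * qfun π a b g) * (if g z true then (b:ℝ) else (a:ℝ)))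
    = objective P π
  rw [swap4 (fun a b g z => (prZ P z * qfun π a b g) * (if g z true then (b:ℝ) else (a:ℝ)))]
  unfold objective
  refine Finset.sum_congr rfl fun z _ => ?_
  have hterm : ∀ (a b : Y) (g : Fin K → Bool → Bool),
      (prZ P z * qfun π a b g) * (if g z true then (b:ℝ) else (a:ℝ))
      = prZ P z * ((if g z true then (b:ℝ) else (a:ℝ)) * qfun π a b g) := by
    intro a b g; ring
  simp only [hterm]
  rw [show (∑ a : Y, ∑ b : Y, ∑ g : Fin K → Bool → Bool,
      prZ P z * ((if g z true then (b:ℝ) else (a:ℝ)) * qfun π a b g))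
      = prZ P z * ∑ a : Y, ∑ b : Y, ∑ g : Fin K → Bool → Bool,
          (if g z true then (b:ℝ) else (a:ℝ)) * qfun π a b g by
    rw [Finset.mul_sum]
    refine Finset.sum_congr rfl fun a _ => ?_
    rw [Finset.mul_sum]
    exact Finset.sum_congr rfl fun b _ => (Finset.mul_sum _ _ _).symm]
  congr 1
  refine Finset.sum_congr rfl fun a _ => Finset.sum_congr rfl fun b _ => ?_
  exact master hnn hcm a b z (fun _ e1 => if e1 then (b:ℝ) else (a:ℝ))

end Backward2

section Forward

variable {Y : Finset ℝ} {K : ℕ}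

lemma collapse2' (c0 c1 : Bool) (f : Bool → Bool → ℝ) :
    ∑ d0 : Bool, ∑ d1 : Bool, (if c0 = d0 ∧ c1 = d1 then f d0 d1 else 0) = f c0 c1 := by
  rw [Finset.sum_eq_single c0]; rotate_left
  · intro d0 _ hne
    exact Finset.sum_eq_zero fun d1 _ => if_neg (by rintro ⟨h, -⟩; exact hne h.symm)
  · intro h; exact absurd (Finset.mem_univ _) h
  rw [Finset.sum_eq_single c1]; rotate_left
  · intro d1 _ hne; exact if_neg (by rintro ⟨-, h⟩; exact hne h.symm)
  · intro h; exact absurd (Finset.mem_univ _) h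
  exact if_pos ⟨rfl, rfl⟩

lemma group_g (z : Fin K) (c : Bool → Bool → ℝ) (X : (Fin K → Bool → Bool) → ℝ) :
    ∑ d0 : Bool, ∑ d1 : Bool, c d0 d1
        * ∑ g : Fin K → Bool → Bool, (if g z false = d0 ∧ g z true = d1 then X g else 0)
      = ∑ g : Fin K → Bool → Bool, c (g z false) (g z true) * X g := by
  have h1 : ∀ d0 d1 : Bool, c d0 d1
      * (∑ g : Fin K → Bool → Bool, (if g z false = d0 ∧ g z true = d1 then X g else 0))
      = ∑ g : Fin K → Bool → Bool,
          (if g z false = d0 ∧ g z true = d1 then c d0 d1 * X g else 0) := by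
    intro d0 d1
    rw [Finset.mul_sum]
    refine Finset.sum_congr rfl fun g _ => ?_
    by_cases h : g z false = d0 ∧ g z true = d1 <;> simp [h]
  simp only [h1]
  rw [swap3 (fun d0 d1 g => if g z false = d0 ∧ g z true = d1 then c d0 d1 * X g else 0)]
  exact Finset.sum_congr rfl fun g _ => collapse2' _ _ _

variable {Ps : Dist (Prim Y K)} {P : Dist (Obs Y K)}

lemma p_factor (hIV : IVvalid Ps) (a b : Y) (g : Fin K → Bool → Bool) (z : Fin K) :
    Ps.p (a, b, g, z) = (∑ z' : Fin K, Ps.p (a, b, g, z')) * Ps.pr {ω | ω.2.2.2 = z} := by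
  have h := hIV a b g z
  rw [pr_point, pr3] at h
  exact h

lemma pr_partition (Ps : Dist (Prim Y K)) (z : Fin K) :
    ∑ y : Y, ∑ d : Bool, Ps.pr {ω | obsY ω = y ∧ obsD ω = d ∧ pz ω = z}
      = Ps.pr {ω | ω.2.2.2 = z} := by
  unfold Dist.pr
  simp only [Set.mem_setOf_eq]
  refine Eq.trans (Finset.sum_congr rfl fun y _ => Finset.sum_comm) ?_
  refine Eq.trans Finset.sum_comm ?_
  refine Finset.sum_congr rfl fun ω _ => ?_
  rw [Finset.sum_eq_single (obsY ω)]; rotate_left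
  · intro y _ hne
    exact Finset.sum_eq_zero fun d _ => if_neg (by rintro ⟨h, -⟩; exact hne h.symm)
  · intro h; exact absurd (Finset.mem_univ _) h
  rw [Finset.sum_eq_single (obsD ω)]; rotate_left
  · intro d _ hne; exact if_neg (by rintro ⟨-, h, -⟩; exact hne h.symm)
  · intro h; exact absurd (Finset.mem_univ _) h
  by_cases hz : ω.2.2.2 = z
  · rw [if_pos ⟨rfl, rfl, hz⟩, if_pos hz]
  · rw [if_neg (by rintro ⟨-, -, h⟩; exact hz h), if_neg hz]

lemma prZ_forward (hgen : generates Ps P) (z : Fin K) :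
    prZ P z = Ps.pr {ω | ω.2.2.2 = z} := by
  rw [prZ_eq, ← pr_partition Ps z]
  exact Finset.sum_congr rfl fun y _ => Finset.sum_congr rfl fun d _ => hgen y d z

/-- Common-marginal computation for an arbitrary primitive distribution. -/
lemma marg_sum_dd (Ps : Dist (Prim Y K)) (z : Fin K) (y0 y1 : Y) :
    ∑ d0 : Bool, ∑ d1 : Bool, marginal Ps z y0 y1 d0 d1
      = ∑ g : Fin K → Bool → Bool, ∑ z' : Fin K, Ps.p (y0, y1, g, z') := by
  simp only [marginal_eq_sum]
  rw [swap3 (fun (d0 d1 : Bool) (g : Fin K → Bool → Bool) =>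
    if g z false = d0 ∧ g z true = d1 then ∑ z' : Fin K, Ps.p (y0, y1, g, z') else 0)]
  exact Finset.sum_congr rfl fun g _ => collapse2' _ _ _

lemma forward_base [NeZero K] (hIV : IVvalid Ps) (hgen : generates Ps P)
    (hPz : ∀ z : Fin K, 0 < prZ P z) : baseConstraints P (marginalColl Ps) := by
  have hSWd1 : ∀ (y : Y) (z : Fin K),
      (∑ y0 : Y, ∑ d1 : Bool, marginal Ps z y0 y true d1)
      = ∑ y0 : Y, ∑ g : Fin K → Bool → Bool,
          if g z false = true then ∑ z' : Fin K, Ps.p (y0, y, g, z') else 0 := by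
    intro y z
    refine Finset.sum_congr rfl fun y0 _ => ?_
    simp only [marginal_eq_sum]
    rw [Finset.sum_comm]
    refine Finset.sum_congr rfl fun g _ => ?_
    by_cases h0 : g z false = true
    · simp only [h0, true_and]
      rw [Finset.sum_eq_single (g z true)]; rotate_left
      · intro d1 _ hne; exact if_neg fun h => hne h.symm
      · intro h; exact absurd (Finset.mem_univ _) h
      simp
    · simp [h0]
  have hSWd0 : ∀ (y : Y) (z : Fin K),
      (∑ y1 : Y, ∑ d1 : Bool, marginal Ps z y y1 false d1)
      = ∑ y1 : Y, ∑ g : Fin K → Bool → Bool,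
          if g z false = false then ∑ z' : Fin K, Ps.p (y, y1, g, z') else 0 := by
    intro y z
    refine Finset.sum_congr rfl fun y1 _ => ?_
    simp only [marginal_eq_sum]
    rw [Finset.sum_comm]
    refine Finset.sum_congr rfl fun g _ => ?_
    by_cases h0 : g z false = false
    · simp only [h0, true_and]
      rw [Finset.sum_eq_single (g z true)]; rotate_left
      · intro d1 _ hne; exact if_neg fun h => hne h.symm
      · intro h; exact absurd (Finset.mem_univ _) h
      simp
    · simp [h0]
  refine ⟨?_, ?_, ?_, ?_, ?_⟩
  · -- data matching, D = 1
    intro y z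
    show obsCond P y true z = ∑ y0 : Y, ∑ d1 : Bool, marginal Ps z y0 y true d1
    rw [hSWd1 y z]
    have hP : P.p (y, true, z) = Ps.pr {ω | ω.2.2.2 = z}
        * ∑ y0 : Y, ∑ g : Fin K → Bool → Bool,
            if g z false = true then ∑ z' : Fin K, Ps.p (y0, y, g, z') else 0 := by
      rw [hgen y true z, gen_event_eq]
      have hre : ∀ (a b : Y) (g : Fin K → Bool → Bool),
          (if (if g z false then b else a) = y ∧ g z false = true
            then Ps.p (a, b, g, z) else 0)
          = (if g z false = true ∧ b = y then Ps.p (a, b, g, z) else 0) :=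
        fun a b g => if_congr (by cases hgz : g z false <;> simp [hgz]) rfl rfl
      simp only [hre]
      rw [show (∑ a : Y, ∑ b : Y, ∑ g : Fin K → Bool → Bool,
          if g z false = true ∧ b = y then Ps.p (a, b, g, z) else 0)
          = ∑ a : Y, ∑ g : Fin K → Bool → Bool,
              if g z false = true then Ps.p (a, y, g, z) else 0 from
        Finset.sum_congr rfl fun a _ => by
          rw [Finset.sum_eq_single y]; rotate_left
          · intro b _ hne
            exact Finset.sum_eq_zero fun g _ => if_neg (by rintro ⟨-, h⟩; exact hne h)
          · intro h; exact absurd (Finset.mem_univ _) h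
          simp only [eq_self_iff_true, and_true]]
      rw [Finset.mul_sum]
      refine Finset.sum_congr rfl fun a _ => ?_
      rw [Finset.mul_sum]
      refine Finset.sum_congr rfl fun g _ => ?_
      by_cases h0 : g z false = true
      · rw [if_pos h0, if_pos h0, p_factor hIV, mul_comm]
      · rw [if_neg h0, if_neg h0, mul_zero]
    unfold obsCond
    rw [hP, ← prZ_forward hgen z, mul_div_cancel_left₀ _ (ne_of_gt (hPz z))]
  · -- data matching, D = 0
    intro y z
    show obsCond P y false z = ∑ y1 : Y, ∑ d1 : Bool, marginal Ps z y y1 false d1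
    rw [hSWd0 y z]
    have hP : P.p (y, false, z) = Ps.pr {ω | ω.2.2.2 = z}
        * ∑ y1 : Y, ∑ g : Fin K → Bool → Bool,
            if g z false = false then ∑ z' : Fin K, Ps.p (y, y1, g, z') else 0 := by
      rw [hgen y false z, gen_event_eq]
      have hre : ∀ (a b : Y) (g : Fin K → Bool → Bool),
          (if (if g z false then b else a) = y ∧ g z false = false
            then Ps.p (a, b, g, z) else 0)
          = (if g z false = false ∧ a = y then Ps.p (a, b, g, z) else 0) :=
        fun a b g => if_congr (by cases hgz : g z false <;> simp [hgz]) rfl rfl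
      simp only [hre]
      rw [show (∑ a : Y, ∑ b : Y, ∑ g : Fin K → Bool → Bool,
          if g z false = false ∧ a = y then Ps.p (a, b, g, z) else 0)
          = ∑ b : Y, ∑ g : Fin K → Bool → Bool,
              if g z false = false then Ps.p (y, b, g, z) else 0 from by
        rw [Finset.sum_eq_single y]; rotate_left
        · intro a _ hne
          exact Finset.sum_eq_zero fun b _ => Finset.sum_eq_zero fun g _ =>
            if_neg (by rintro ⟨-, h⟩; exact hne h)
        · intro h; exact absurd (Finset.mem_univ _) h
        simp only [eq_self_iff_true, and_true]]
      rw [Finset.mul_sum]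
      refine Finset.sum_congr rfl fun b _ => ?_
      rw [Finset.mul_sum]
      refine Finset.sum_congr rfl fun g _ => ?_
      by_cases h0 : g z false = false
      · rw [if_pos h0, if_pos h0, p_factor hIV, mul_comm]
      · rw [if_neg h0, if_neg h0, mul_zero]
    unfold obsCond
    rw [hP, ← prZ_forward hgen z, mul_div_cancel_left₀ _ (ne_of_gt (hPz z))]
  · -- common potential-outcome marginal
    intro y0 y1 z
    show (∑ d0 : Bool, ∑ d1 : Bool, marginal Ps z y0 y1 d0 d1)
      = ∑ d0 : Bool, ∑ d1 : Bool, marginal Ps 0 y0 y1 d0 d1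
    rw [marg_sum_dd, marg_sum_dd]
  · -- nonnegativity
    intro z y0 y1 d0 d1
    exact pr_nonneg Ps _
  · -- pmf
    intro z
    show (∑ y0 : Y, ∑ y1 : Y, ∑ d0 : Bool, ∑ d1 : Bool, marginal Ps z y0 y1 d0 d1) = 1
    simp only [marg_sum_dd]
    rw [← sum_prim (fun ω => Ps.p ω)]
    exact Ps.sum_one

lemma forward_theta [NeZero K] (hIV : IVvalid Ps) (hgen : generates Ps P) :
    theta Ps = objective P (marginalColl Ps) := by
  rw [theta_eq]
  rw [swap4 (fun (a b : Y) (g : Fin K → Bool → Bool) (z : Fin K) =>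
    Ps.p (a, b, g, z) * (if g z true then (b:ℝ) else (a:ℝ)))]
  unfold objective
  refine Finset.sum_congr rfl fun z _ => ?_
  have hRHS : ∀ (y0 y1 : Y),
      (∑ d0 : Bool, ∑ d1 : Bool,
        (if d1 then (y1:ℝ) else (y0:ℝ)) * marginalColl Ps z y0 y1 d0 d1)
      = ∑ g : Fin K → Bool → Bool,
          (if g z true then (y1:ℝ) else (y0:ℝ)) * ∑ z' : Fin K, Ps.p (y0, y1, g, z') := by
    intro y0 y1
    have : ∀ (d0 d1 : Bool), marginalColl Ps z y0 y1 d0 d1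
        = ∑ g : Fin K → Bool → Bool,
            if g z false = d0 ∧ g z true = d1
              then ∑ z' : Fin K, Ps.p (y0, y1, g, z') else 0 := fun d0 d1 =>
      marginal_eq_sum Ps z y0 y1 d0 d1
    simp only [this]
    exact group_g z (fun _ e1 => if e1 then (y1:ℝ) else (y0:ℝ))
      (fun g => ∑ z' : Fin K, Ps.p (y0, y1, g, z'))
  rw [show (prZ P z * ∑ y0 : Y, ∑ y1 : Y, ∑ d0 : Bool, ∑ d1 : Bool,
      (if d1 then (y1:ℝ) else (y0:ℝ)) * marginalColl Ps z y0 y1 d0 d1)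
      = prZ P z * ∑ y0 : Y, ∑ y1 : Y, ∑ g : Fin K → Bool → Bool,
          (if g z true then (y1:ℝ) else (y0:ℝ)) * ∑ z' : Fin K, Ps.p (y0, y1, g, z') by
    congr 1
    exact Finset.sum_congr rfl fun y0 _ => Finset.sum_congr rfl fun y1 _ => hRHS y0 y1]
  rw [prZ_forward hgen z, Finset.mul_sum]
  refine Finset.sum_congr rfl fun a _ => ?_
  rw [Finset.mul_sum]
  refine Finset.sum_congr rfl fun b _ => ?_
  rw [Finset.mul_sum]
  refine Finset.sum_congr rfl fun g _ => ?_
  rw [p_factor hIV]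
  ring

end Forward

section Main

variable {Y : Finset ℝ} {K : ℕ}

lemma sum_lin {ι : Type*} [Fintype ι] (f g : ι → ℝ) (a b : ℝ) :
    ∑ i, (a * f i + b * g i) = a * ∑ i, f i + b * ∑ i, g i := by
  rw [Finset.sum_add_distrib, Finset.mul_sum, Finset.mul_sum]

lemma sum_lin2 {ι κ : Type*} [Fintype ι] [Fintype κ] (f g : ι → κ → ℝ) (a b : ℝ) :
    ∑ i, ∑ j, (a * f i j + b * g i j)
      = a * (∑ i, ∑ j, f i j) + b * (∑ i, ∑ j, g i j) := by
  rw [← sum_lin]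
  exact Finset.sum_congr rfl fun i _ => sum_lin _ _ _ _

lemma sum_lin4 {ι κ μ ν : Type*} [Fintype ι] [Fintype κ] [Fintype μ] [Fintype ν]
    (f g : ι → κ → μ → ν → ℝ) (a b : ℝ) :
    ∑ i, ∑ j, ∑ k, ∑ l, (a * f i j k l + b * g i j k l)
      = a * (∑ i, ∑ j, ∑ k, ∑ l, f i j k l) + b * (∑ i, ∑ j, ∑ k, ∑ l, g i j k l) := by
  rw [← sum_lin2]
  exact Finset.sum_congr rfl fun i _ => Finset.sum_congr rfl fun j _ => sum_lin2 _ _ _ _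

lemma coll_apply (π1 π2 : Coll Y K) (a b : ℝ) (z : Fin K) (y0 y1 : Y) (d0 d1 : Bool) :
    (a • π1 + b • π2) z y0 y1 d0 d1
      = a * π1 z y0 y1 d0 d1 + b * π2 z y0 y1 d0 d1 := by
  simp [Pi.add_apply, Pi.smul_apply, smul_eq_mul]

lemma objective_affine (P : Dist (Obs Y K)) (π1 π2 : Coll Y K) (a b : ℝ) :
    objective P (a • π1 + b • π2) = a * objective P π1 + b * objective P π2 := by
  unfold objective
  rw [Finset.mul_sum, Finset.mul_sum, ← Finset.sum_add_distrib]
  refine Finset.sum_congr rfl fun z _ => ?_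
  have key : (∑ y0 : Y, ∑ y1 : Y, ∑ d0 : Bool, ∑ d1 : Bool,
      (if d1 then (y1:ℝ) else (y0:ℝ)) * (a • π1 + b • π2) z y0 y1 d0 d1)
      = a * (∑ y0 : Y, ∑ y1 : Y, ∑ d0 : Bool, ∑ d1 : Bool,
          (if d1 then (y1:ℝ) else (y0:ℝ)) * π1 z y0 y1 d0 d1)
        + b * (∑ y0 : Y, ∑ y1 : Y, ∑ d0 : Bool, ∑ d1 : Bool,
          (if d1 then (y1:ℝ) else (y0:ℝ)) * π2 z y0 y1 d0 d1) := by
    rw [← sum_lin4]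
    refine Finset.sum_congr rfl fun y0 _ => Finset.sum_congr rfl fun y1 _ =>
      Finset.sum_congr rfl fun d0 _ => Finset.sum_congr rfl fun d1 _ => ?_
    rw [coll_apply]
    ring
  rw [key]
  ring

lemma S_convex (P : Dist (Obs Y K)) [NeZero K] (R : Set (Coll Y K)) (hR : Convex ℝ R) :
    Convex ℝ {π : Coll Y K | π ∈ R ∧ baseConstraints P π} := by
  rintro π1 ⟨h1R, h1d1, h1d0, h1cm, h1nn, h1s⟩ π2 ⟨h2R, h2d1, h2d0, h2cm, h2nn, h2s⟩
    a b ha hb hab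
  refine ⟨hR h1R h2R ha hb hab, ?_, ?_, ?_, ?_, ?_⟩
  · intro y z
    simp only [coll_apply]
    rw [sum_lin2, ← h1d1 y z, ← h2d1 y z, ← add_mul, hab, one_mul]
  · intro y z
    simp only [coll_apply]
    rw [sum_lin2, ← h1d0 y z, ← h2d0 y z, ← add_mul, hab, one_mul]
  · intro y0 y1 z
    simp only [coll_apply]
    rw [sum_lin2, sum_lin2, h1cm y0 y1 z, h2cm y0 y1 z]
  · intro z y0 y1 d0 d1
    rw [coll_apply]
    exact add_nonneg (mul_nonneg ha (h1nn z y0 y1 d0 d1)) (mul_nonneg hb (h2nn z y0 y1 d0 d1))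
  · intro z
    simp only [coll_apply]
    rw [sum_lin4, h1s z, h2s z, mul_one, mul_one, hab]

lemma set_eq {Y : Finset ℝ} {K : ℕ} [NeZero K]
    (P : Dist (Obs Y K)) (hPz : ∀ z : Fin K, 0 < prZ P z) (R : Set (Coll Y K)) :
    ThetaI P {Ps | IVvalid Ps ∧ marginalColl Ps ∈ R}
      = objective P '' {π | π ∈ R ∧ baseConstraints P π} := by
  ext t
  constructor
  · rintro ⟨Ps, ⟨hIV, hRm⟩, hgen, rfl⟩
    exact ⟨marginalColl Ps, ⟨hRm, forward_base hIV hgen hPz⟩, (forward_theta hIV hgen).symm⟩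
  · rintro ⟨π, ⟨hπR, hbc⟩, rfl⟩
    obtain ⟨hd1, hd0, hcm', hnn, hpmf⟩ := hbc
    have hcm : ∀ (z : Fin K) (y0 y1 : Y),
        (∑ d0 : Bool, ∑ d1 : Bool, π z y0 y1 d0 d1) = mupi π y0 y1 :=
      fun z y0 y1 => hcm' y0 y1 z
    have hs1 : ∑ y0 : Y, ∑ y1 : Y, mupi π y0 y1 = 1 := hpmf 0
    refine ⟨PsC P π hnn hcm hs1, ⟨PsC_IVvalid hnn hcm hs1, ?_⟩,
      PsC_generates hnn hcm hs1 hPz hd1 hd0, PsC_theta hnn hcm hs1⟩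
    rw [PsC_marginal]
    exact hπR

end Main

/-- Corollary 1: with only IV validity and convex marginal
restrictions `ℛ*`, the identified set for `θ` is an interval whose endpoints are
the optimal values of the linear program over collections of marginals. -/
theorem statement1 {Y : Finset ℝ} {K : ℕ} [NeZero K]
    (P : Dist (Obs Y K)) (hPz : ∀ z : Fin K, 0 < prZ P z)
    (R : Set (Coll Y K)) (hR : Convex ℝ R) :
    Convex ℝ (ThetaI P {Ps | IVvalid Ps ∧ marginalColl Ps ∈ R}) ∧
    sSup (ThetaI P {Ps | IVvalid Ps ∧ marginalColl Ps ∈ R})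
      = sSup (objective P '' {π | π ∈ R ∧ baseConstraints P π}) ∧
    sInf (ThetaI P {Ps | IVvalid Ps ∧ marginalColl Ps ∈ R})
      = sInf (objective P '' {π | π ∈ R ∧ baseConstraints P π}) := by
  have hset := set_eq P hPz R
  refine ⟨?_, by rw [hset], by rw [hset]⟩
  rw [hset]
  rintro x ⟨π1, h1, rfl⟩ y ⟨π2, h2, rfl⟩ a b ha hb hab
  refine ⟨a • π1 + b • π2, S_convex P R hR h1 h2 ha hb hab, ?_⟩
  rw [objective_affine]
  simp [smul_eq_mul]

end IVPol
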